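/- The pullback of a semi-stable cokernel along an arbitrary morphism exists and is again a semi-stable cokernel. -/

import Mathlib

open CategoryTheory CategoryTheory.Limits ZeroObject

universe v u

variable {𝒞 : Type u} [Category.{v} 𝒞] [Preadditive 𝒞] [HasZeroObject 𝒞] [HasBinaryBiproducts 𝒞]

/-- `d` is a cokernel of some morphism. -/
def IsCokernelOfSome {B X : 𝒞} (d : B ⟶ X) : Prop :=
  ∃ (A : 𝒞) (f : A ⟶ B) (w : f ≫ d = 0), Nonempty (IsColimit (CokernelCofork.ofπ d w))

/-- `i` is a kernel of some morphism. -/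
def IsKernelOfSome {A B : 𝒞} (i : A ⟶ B) : Prop :=
  ∃ (X : 𝒞) (f : B ⟶ X) (w : i ≫ f = 0), Nonempty (IsLimit (KernelFork.ofι i w))

/-- A semi-stable cokernel: a cokernel whose pullback along every morphism exists
and is again a cokernel. -/
def IsSemiStableCokernel {B X : 𝒞} (d : B ⟶ X) : Prop :=
  IsCokernelOfSome d ∧ ∀ (C' : 𝒞) (h : C' ⟶ X), ∃ (B' : 𝒞) (g : B' ⟶ B) (d' : B' ⟶ C'),
    IsPullback g d' d h ∧ IsCokernelOfSome d'

/-- A semi-stable kernel: a kernel whose pushout along every morphism exists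
and is again a kernel. -/
def IsSemiStableKernel {A B : 𝒞} (i : A ⟶ B) : Prop :=
  IsKernelOfSome i ∧ ∀ (A' : 𝒞) (h : A ⟶ A'), ∃ (P : 𝒞) (g : B ⟶ P) (i' : A' ⟶ P),
    IsPushout i h g i' ∧ IsKernelOfSome i'

/-- A cokernel can be transported along an isomorphism of the source. -/
lemma isCokernelOfSome_of_iso {B₁ B₂ C : 𝒞} (e : B₁ ≅ B₂) (d₁ : B₁ ⟶ C) (d₂ : B₂ ⟶ C)
    (he : e.hom ≫ d₂ = d₁) (hc : IsCokernelOfSome d₂) : IsCokernelOfSome d₁ := by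
  obtain ⟨A, f, w, ⟨H⟩⟩ := hc
  have he' : e.inv ≫ d₁ = d₂ := by rw [← he, Iso.inv_hom_id_assoc]
  refine ⟨A, f ≫ e.inv, by rw [Category.assoc, he', w], ⟨?_⟩⟩
  refine CokernelCofork.IsColimit.ofπ _ _
    (fun {Z} k hk => H.desc (CokernelCofork.ofπ (e.inv ≫ k)
      (by rw [← Category.assoc]; exact hk))) (fun {Z} k hk => ?_) ?_
  · have := H.fac (CokernelCofork.ofπ (e.inv ≫ k)
      (by rw [← Category.assoc]; exact hk)) WalkingParallelPair.one
    simp only [Cofork.app_one_eq_π, Cofork.π_ofπ] at this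
    rw [← he, Category.assoc, this, Iso.hom_inv_id_assoc]
  · intro Z k hk m hm
    refine Cofork.IsColimit.hom_ext H ?_
    have := H.fac (CokernelCofork.ofπ (e.inv ≫ k)
      (by rw [← Category.assoc]; exact hk)) WalkingParallelPair.one
    simp only [Cofork.app_one_eq_π, Cofork.π_ofπ] at this
    rw [Cofork.π_ofπ, this, ← hm, ← Category.assoc, he']

theorem stmt4 {B X C' B' : 𝒞} (d : B ⟶ X) (hd : IsSemiStableCokernel d)
    (h : C' ⟶ X) (g : B' ⟶ B) (d' : B' ⟶ C') (hPB : IsPullback g d' d h) :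
    IsSemiStableCokernel d' := by
  constructor
  · obtain ⟨B₂, g₂, d₂, hPB₂, hc₂⟩ := hd.2 C' h
    exact isCokernelOfSome_of_iso (hPB.isoIsPullback _ _ hPB₂) d' d₂
      (by simp) hc₂
  · intro C'' h'
    obtain ⟨B₂, g₂, d₂, hPB₂, hc₂⟩ := hd.2 C'' (h' ≫ h)
    exact ⟨B₂, _, d₂, hPB₂.of_right' hPB, hc₂⟩
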